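/- Let V be a joint distribution of (U, X, Y, X̃, Ỹ, Z) on finite alphabets with V_{XU} = V_{X̃U} and V_{YU} = V_{ỸU}, and suppose H_V(X Y | Z U) ≥ H_V(X̃ Ỹ | Z U). Then I_V(X̃ Ỹ ∧ X Y Z | U) + I_V(X̃ ∧ Ỹ | U) ≥ I_V(X Y ∧ Z | U) + I_V(X ∧ Y | U). -/

import Mathlib

open Finset Real

/-- Shannon entropy (in bits) of a distribution on a finite type. -/
noncomputable def ent {α : Type*} [Fintype α] (p : α → ℝ) : ℝ :=
  - ∑ a, p a * Real.logb 2 (p a)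

/-- Conditional mutual information `I(A ∧ B | C)` of a joint distribution on
`γ × α × β` whose first coordinate is the conditioning variable. -/
noncomputable def cmi {γ α β : Type*} [Fintype γ] [Fintype α] [Fintype β]
    (p : γ × α × β → ℝ) : ℝ :=
  ent (fun q : γ × α => ∑ b, p (q.1, q.2, b))
    + ent (fun q : γ × β => ∑ a, p (q.1, a, q.2))
    - ent p
    - ent (fun c : γ => ∑ a, ∑ b, p (c, a, b))

/-- Let `V` be a joint distribution of `(U, X, Y, X̃, Ỹ, Z)` with `V_{XU} = V_{X̃U}`,
`V_{YU} = V_{ỸU}`, and `H_V(X Y | Z U) ≥ H_V(X̃ Ỹ | Z U)`.  Then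
`I_V(X̃ Ỹ ∧ X Y Z | U) + I_V(X̃ ∧ Ỹ | U) ≥ I_V(X Y ∧ Z | U) + I_V(X ∧ Y | U)`. -/
lemma cmi_nonneg {γ α β : Type*} [Fintype γ] [Fintype α] [Fintype β]
    (p : γ × α × β → ℝ) (h0 : ∀ t, 0 ≤ p t) (h1 : ∑ t, p t = 1) : 0 ≤ cmi p := by
  have hlog2 : (0:ℝ) < Real.log 2 := Real.log_pos one_lt_two
  have eP : ent p = -∑ c, ∑ a, ∑ b, p (c,a,b) * Real.logb 2 (p (c,a,b)) := by
    unfold ent; simp [Fintype.sum_prod_type]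
  have eA : ent (fun q : γ × α => ∑ b, p (q.1, q.2, b))
      = -∑ c, ∑ a, ∑ b, p (c,a,b) * Real.logb 2 (∑ b', p (c,a,b')) := by
    unfold ent
    simp only [Fintype.sum_prod_type, neg_inj]
    exact Finset.sum_congr rfl fun c _ => Finset.sum_congr rfl fun a _ => Finset.sum_mul _ _ _
  have eB : ent (fun q : γ × β => ∑ a, p (q.1, a, q.2))
      = -∑ c, ∑ a, ∑ b, p (c,a,b) * Real.logb 2 (∑ a', p (c,a',b)) := by
    unfold ent
    simp only [Fintype.sum_prod_type, neg_inj]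
    refine Finset.sum_congr rfl fun c _ => ?_
    rw [Finset.sum_comm]
    exact Finset.sum_congr rfl fun b _ => Finset.sum_mul _ _ _
  have eC : ent (fun c : γ => ∑ a, ∑ b, p (c, a, b))
      = -∑ c, ∑ a, ∑ b, p (c,a,b) * Real.logb 2 (∑ a', ∑ b', p (c,a',b')) := by
    unfold ent
    simp only [neg_inj]
    refine Finset.sum_congr rfl fun c _ => ?_
    rw [Finset.sum_mul]
    exact Finset.sum_congr rfl fun a _ => Finset.sum_mul _ _ _
  have key : cmi p = ∑ c, ∑ a, ∑ b, p (c,a,b) *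
      (Real.logb 2 (p (c,a,b)) + Real.logb 2 (∑ a', ∑ b', p (c,a',b'))
        - Real.logb 2 (∑ b', p (c,a,b')) - Real.logb 2 (∑ a', p (c,a',b))) := by
    rw [cmi, eA, eB, eC, eP]
    simp only [mul_add, mul_sub, Finset.sum_add_distrib, Finset.sum_sub_distrib]
    ring
  -- pointwise lower bound
  have hpt : ∀ c a b, ((p (c,a,b)) - (∑ b', p (c,a,b')) * (∑ a', p (c,a',b)) / (∑ a', ∑ b', p (c,a',b'))) / Real.log 2
      ≤ p (c,a,b) *
      (Real.logb 2 (p (c,a,b)) + Real.logb 2 (∑ a', ∑ b', p (c,a',b'))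
        - Real.logb 2 (∑ b', p (c,a,b')) - Real.logb 2 (∑ a', p (c,a',b))) := by
    intro c a b
    set pt := p (c,a,b) with hpt0
    set A := ∑ b', p (c,a,b') with hA
    set B := ∑ a', p (c,a',b) with hB
    set C := ∑ a', ∑ b', p (c,a',b') with hC
    have hA0 : 0 ≤ A := Finset.sum_nonneg fun _ _ => h0 _
    have hB0 : 0 ≤ B := Finset.sum_nonneg fun _ _ => h0 _
    have hC0 : 0 ≤ C := Finset.sum_nonneg fun _ _ => Finset.sum_nonneg fun _ _ => h0 _
    rcases eq_or_lt_of_le (h0 (c,a,b)) with h | h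
    · rw [hpt0, ← h]
      simp only [zero_mul, zero_sub, neg_div, neg_nonpos]
      positivity
    · have hAp : 0 < A := lt_of_lt_of_le h (Finset.single_le_sum (fun b' _ => h0 (c,a,b')) (Finset.mem_univ b))
      have hBp : 0 < B := lt_of_lt_of_le h (Finset.single_le_sum (fun a' _ => h0 (c,a',b)) (Finset.mem_univ a))
      have hCp : 0 < C := lt_of_lt_of_le hAp (Finset.single_le_sum (fun a' _ => Finset.sum_nonneg fun b' _ => h0 (c,a',b')) (Finset.mem_univ a))
      have hr : 0 < A * B / (C * pt) := by positivity
      have hlog := Real.log_le_sub_one_of_pos hr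
      have hexp : Real.log (A * B / (C * pt)) = Real.log A + Real.log B - Real.log C - Real.log pt := by
        rw [Real.log_div (by positivity) (by positivity), Real.log_mul hAp.ne' hBp.ne',
          Real.log_mul hCp.ne' h.ne']
        ring
      rw [hexp] at hlog
      have h2 : pt * (Real.log A + Real.log B - Real.log C - Real.log pt)
          ≤ A * B / C - pt := by
        have := mul_le_mul_of_nonneg_left hlog h.le
        calc pt * (Real.log A + Real.log B - Real.log C - Real.log pt)
            ≤ pt * (A * B / (C * pt) - 1) := this
          _ = A * B / C - pt := by have hpt : pt ≠ 0 := h.ne'; field_simp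
      simp only [Real.logb]
      rw [div_le_iff₀ hlog2]
      calc pt - A * B / C ≤ pt * (Real.log pt + Real.log C - Real.log A - Real.log B) := by linarith
        _ = pt * (Real.log pt / Real.log 2 + Real.log C / Real.log 2 - Real.log A / Real.log 2 - Real.log B / Real.log 2) * Real.log 2 := by
            field_simp
  -- sum of q is at most 1
  have hq : ∑ c, ∑ a, ∑ b, (∑ b', p (c,a,b')) * (∑ a', p (c,a',b)) / (∑ a', ∑ b', p (c,a',b')) ≤ 1 := by
    have h2 : ∀ c, ∑ a, ∑ b, (∑ b', p (c,a,b')) * (∑ a', p (c,a',b)) / (∑ a', ∑ b', p (c,a',b'))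
        ≤ ∑ a', ∑ b', p (c,a',b') := by
      intro c
      have hC0 : 0 ≤ ∑ a', ∑ b', p (c,a',b') :=
        Finset.sum_nonneg fun _ _ => Finset.sum_nonneg fun _ _ => h0 _
      have he1 : ∑ a, ∑ b, ((∑ b', p (c,a,b')) * ∑ a', p (c,a',b)) / (∑ a', ∑ b', p (c,a',b'))
          = ((∑ a', ∑ b', p (c,a',b')) * (∑ a', ∑ b', p (c,a',b'))) / (∑ a', ∑ b', p (c,a',b')) := by
        conv_rhs => rw [show (∑ a', ∑ b', p (c,a',b')) * (∑ a', ∑ b', p (c,a',b'))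
            = (∑ a', ∑ b', p (c,a',b')) * (∑ b, ∑ a', p (c,a',b)) from by rw [Finset.sum_comm],
          Finset.sum_mul_sum]
        simp only [Finset.sum_div]
      rw [he1]
      rcases eq_or_ne (∑ a', ∑ b', p (c,a',b')) 0 with h | h
      · simp [h]
      · rw [mul_div_assoc, div_self h, mul_one]
    calc _ ≤ ∑ c, ∑ a', ∑ b', p (c,a',b') := Finset.sum_le_sum fun c _ => h2 c
      _ = 1 := by rw [← h1]; simp [Fintype.sum_prod_type]
  have hsum : (1 - ∑ c, ∑ a, ∑ b, (∑ b', p (c,a,b')) * (∑ a', p (c,a',b)) / (∑ a', ∑ b', p (c,a',b'))) / Real.log 2 ≤ cmi p := by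
    rw [key]
    have : (1 - ∑ c, ∑ a, ∑ b, (∑ b', p (c,a,b')) * (∑ a', p (c,a',b)) / (∑ a', ∑ b', p (c,a',b'))) / Real.log 2
        = ∑ c, ∑ a, ∑ b, ((p (c,a,b)) - (∑ b', p (c,a,b')) * (∑ a', p (c,a',b)) / (∑ a', ∑ b', p (c,a',b'))) / Real.log 2 := by
      rw [← h1]
      simp only [Fintype.sum_prod_type, sub_div, Finset.sum_div, ← Finset.sum_sub_distrib]
    rw [this]
    exact Finset.sum_le_sum fun c _ => Finset.sum_le_sum fun a _ => Finset.sum_le_sum fun b _ => hpt c a b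
  have : 0 ≤ (1 - ∑ c, ∑ a, ∑ b, (∑ b', p (c,a,b')) * (∑ a', p (c,a',b)) / (∑ a', ∑ b', p (c,a',b'))) / Real.log 2 := by
    apply div_nonneg _ hlog2.le
    linarith
  linarith

lemma ent_reindex {α β : Type*} [Fintype α] [Fintype β] (e : α ≃ β) (p : β → ℝ) :
    ent (fun a => p (e a)) = ent p := by
  unfold ent
  exact congrArg Neg.neg (Equiv.sum_comp e fun b => p b * Real.logb 2 (p b))

lemma ent_reindex' {α β : Type*} [Fintype α] [Fintype β] (e : α ≃ β) (p : β → ℝ)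
    (q : α → ℝ) (h : ∀ a, q a = p (e a)) : ent q = ent p := by
  rw [show q = fun a => p (e a) from funext h]
  exact ent_reindex e p

def pe1 {𝒰 𝒳 𝒴 𝒵 : Type} : (𝒰 × 𝒵) × (𝒳 × 𝒴) ≃ 𝒰 × 𝒳 × 𝒴 × 𝒵 :=
  ⟨fun q => (q.1.1, q.2.1, q.2.2, q.1.2), fun r => ((r.1, r.2.2.2), (r.2.1, r.2.2.1)),
    fun _ => rfl, fun _ => rfl⟩

def pe2 {𝒰 𝒳 𝒴 𝒵 : Type} : 𝒰 × (𝒳 × 𝒴) × 𝒵 ≃ 𝒰 × 𝒳 × 𝒴 × 𝒵 :=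
  ⟨fun q => (q.1, q.2.1.1, q.2.1.2, q.2.2), fun r => (r.1, (r.2.1, r.2.2.1), r.2.2.2),
    fun _ => rfl, fun _ => rfl⟩

def pe3 {𝒰 𝒳 𝒴 𝒵 : Type} : 𝒰 × (𝒳 × 𝒴) × (𝒳 × 𝒴 × 𝒵) ≃ 𝒰 × 𝒳 × 𝒴 × 𝒳 × 𝒴 × 𝒵 :=
  ⟨fun q => (q.1, q.2.2.1, q.2.2.2.1, q.2.1.1, q.2.1.2, q.2.2.2.2),
    fun t => (t.1, (t.2.2.2.1, t.2.2.2.2.1), (t.2.1, t.2.2.1, t.2.2.2.2.2)),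
    fun _ => rfl, fun _ => rfl⟩

def pesub {𝒰 𝒳 𝒴 𝒵 : Type} : (𝒰 × 𝒵) × (𝒳 × 𝒴) × (𝒳 × 𝒴) ≃ 𝒰 × 𝒳 × 𝒴 × 𝒳 × 𝒴 × 𝒵 :=
  ⟨fun w => (w.1.1, w.2.1.1, w.2.1.2, w.2.2.1, w.2.2.2, w.1.2),
    fun t => ((t.1, t.2.2.2.2.2), (t.2.1, t.2.2.1), (t.2.2.2.1, t.2.2.2.2.1)),
    fun _ => rfl, fun _ => rfl⟩

theorem equivocation_pair_mi_inequality {𝒰 𝒳 𝒴 𝒵 : Type}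
    [Fintype 𝒰] [Fintype 𝒳] [Fintype 𝒴] [Fintype 𝒵]
    (V : 𝒰 × 𝒳 × 𝒴 × 𝒳 × 𝒴 × 𝒵 → ℝ)   -- coordinates (U, X, Y, X̃, Ỹ, Z)
    (hV0 : ∀ t, 0 ≤ V t) (hV1 : ∑ t, V t = 1)
    (hmargX : ∀ u a, (∑ y, ∑ xt, ∑ yt, ∑ z, V (u, a, y, xt, yt, z))
        = ∑ x, ∑ y, ∑ yt, ∑ z, V (u, x, y, a, yt, z))
    (hmargY : ∀ u b, (∑ x, ∑ xt, ∑ yt, ∑ z, V (u, x, b, xt, yt, z))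
        = ∑ x, ∑ y, ∑ xt, ∑ z, V (u, x, y, xt, b, z))
    (hH : ent (fun p : 𝒰 × 𝒳 × 𝒴 × 𝒵 =>
            ∑ x, ∑ y, V (p.1, x, y, p.2.1, p.2.2.1, p.2.2.2))
          - ent (fun p : 𝒰 × 𝒵 =>
              ∑ x, ∑ y, ∑ xt, ∑ yt, V (p.1, x, y, xt, yt, p.2))
        ≤ ent (fun p : 𝒰 × 𝒳 × 𝒴 × 𝒵 =>
            ∑ xt, ∑ yt, V (p.1, p.2.1, p.2.2.1, xt, yt, p.2.2.2))
          - ent (fun p : 𝒰 × 𝒵 =>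
              ∑ x, ∑ y, ∑ xt, ∑ yt, V (p.1, x, y, xt, yt, p.2))) :
    cmi (fun p : 𝒰 × (𝒳 × 𝒴) × 𝒵 =>
        ∑ xt, ∑ yt, V (p.1, p.2.1.1, p.2.1.2, xt, yt, p.2.2))
      + cmi (fun p : 𝒰 × 𝒳 × 𝒴 =>
          ∑ xt, ∑ yt, ∑ z, V (p.1, p.2.1, p.2.2, xt, yt, z))
    ≤ cmi (fun p : 𝒰 × (𝒳 × 𝒴) × (𝒳 × 𝒴 × 𝒵) =>
          V (p.1, p.2.2.1, p.2.2.2.1, p.2.1.1, p.2.1.2, p.2.2.2.2))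
      + cmi (fun p : 𝒰 × 𝒳 × 𝒴 =>
          ∑ x, ∑ y, ∑ z, V (p.1, x, y, p.2.1, p.2.2, z)) := by
  -- ent-term identifications
  have ha1 : ent (fun q : 𝒰 × (𝒳 × 𝒴) => ∑ z : 𝒵, ∑ xt : 𝒳, ∑ yt : 𝒴,
        V (q.1, q.2.1, q.2.2, xt, yt, z))
      = ent (fun r : 𝒰 × 𝒳 × 𝒴 => ∑ xt : 𝒳, ∑ yt : 𝒴, ∑ z : 𝒵,
        V (r.1, r.2.1, r.2.2, xt, yt, z)) := by
    refine congrArg ent (funext fun q => ?_)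
    calc ∑ z : 𝒵, ∑ xt : 𝒳, ∑ yt : 𝒴, V (q.1, q.2.1, q.2.2, xt, yt, z)
        = ∑ xt : 𝒳, ∑ z : 𝒵, ∑ yt : 𝒴, V (q.1, q.2.1, q.2.2, xt, yt, z) := Finset.sum_comm
      _ = ∑ xt : 𝒳, ∑ yt : 𝒴, ∑ z : 𝒵, V (q.1, q.2.1, q.2.2, xt, yt, z) :=
          Finset.sum_congr rfl fun _ _ => Finset.sum_comm
  have ha2 : ent (fun q : 𝒰 × 𝒵 => ∑ w : 𝒳 × 𝒴, ∑ xt : 𝒳, ∑ yt : 𝒴,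
        V (q.1, w.1, w.2, xt, yt, q.2))
      = ent (fun r : 𝒰 × 𝒵 => ∑ x, ∑ y, ∑ xt, ∑ yt, V (r.1, x, y, xt, yt, r.2)) := by
    refine congrArg ent (funext fun q => ?_)
    simp only [Fintype.sum_prod_type]
  have ha3 : ent (fun p : 𝒰 × (𝒳 × 𝒴) × 𝒵 => ∑ xt, ∑ yt,
        V (p.1, p.2.1.1, p.2.1.2, xt, yt, p.2.2))
      = ent (fun r : 𝒰 × 𝒳 × 𝒴 × 𝒵 => ∑ xt, ∑ yt,
        V (r.1, r.2.1, r.2.2.1, xt, yt, r.2.2.2)) :=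
    ent_reindex' pe2 _ _ (fun a => rfl)
  have hswapU : ∀ c : 𝒰, (∑ xt : 𝒳, ∑ yt : 𝒴, ∑ x : 𝒳, ∑ y : 𝒴, ∑ z : 𝒵,
        V (c, x, y, xt, yt, z))
      = ∑ x : 𝒳, ∑ y : 𝒴, ∑ xt : 𝒳, ∑ yt : 𝒴, ∑ z : 𝒵, V (c, x, y, xt, yt, z) := by
    intro c
    calc ∑ xt : 𝒳, ∑ yt : 𝒴, ∑ x : 𝒳, ∑ y : 𝒴, ∑ z : 𝒵, V (c, x, y, xt, yt, z)
        = ∑ xt : 𝒳, ∑ x : 𝒳, ∑ yt : 𝒴, ∑ y : 𝒴, ∑ z : 𝒵, V (c, x, y, xt, yt, z) :=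
          Finset.sum_congr rfl fun _ _ => Finset.sum_comm
      _ = ∑ x : 𝒳, ∑ xt : 𝒳, ∑ yt : 𝒴, ∑ y : 𝒴, ∑ z : 𝒵, V (c, x, y, xt, yt, z) :=
          Finset.sum_comm
      _ = ∑ x : 𝒳, ∑ xt : 𝒳, ∑ y : 𝒴, ∑ yt : 𝒴, ∑ z : 𝒵, V (c, x, y, xt, yt, z) :=
          Finset.sum_congr rfl fun _ _ => Finset.sum_congr rfl fun _ _ => Finset.sum_comm
      _ = ∑ x : 𝒳, ∑ y : 𝒴, ∑ xt : 𝒳, ∑ yt : 𝒴, ∑ z : 𝒵, V (c, x, y, xt, yt, z) :=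
          Finset.sum_congr rfl fun _ _ => Finset.sum_comm
  have ha4 : ent (fun c : 𝒰 => ∑ w : 𝒳 × 𝒴, ∑ z : 𝒵, ∑ xt : 𝒳, ∑ yt : 𝒴,
        V (c, w.1, w.2, xt, yt, z))
      = ent (fun c : 𝒰 => ∑ x, ∑ y, ∑ xt, ∑ yt, ∑ z, V (c, x, y, xt, yt, z)) := by
    refine congrArg ent (funext fun c => ?_)
    simp only [Fintype.sum_prod_type]
    refine Finset.sum_congr rfl fun x _ => Finset.sum_congr rfl fun y _ => ?_
    calc ∑ z : 𝒵, ∑ xt : 𝒳, ∑ yt : 𝒴, V (c, x, y, xt, yt, z)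
        = ∑ xt : 𝒳, ∑ z : 𝒵, ∑ yt : 𝒴, V (c, x, y, xt, yt, z) := Finset.sum_comm
      _ = ∑ xt : 𝒳, ∑ yt : 𝒴, ∑ z : 𝒵, V (c, x, y, xt, yt, z) :=
          Finset.sum_congr rfl fun _ _ => Finset.sum_comm
  have hc1 : ent (fun q : 𝒰 × (𝒳 × 𝒴) => ∑ w : 𝒳 × 𝒴 × 𝒵,
        V (q.1, w.1, w.2.1, q.2.1, q.2.2, w.2.2))
      = ent (fun r : 𝒰 × 𝒳 × 𝒴 => ∑ x, ∑ y, ∑ z, V (r.1, x, y, r.2.1, r.2.2, z)) := by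
    refine congrArg ent (funext fun q => ?_)
    simp only [Fintype.sum_prod_type]
  have hc2 : ent (fun q : 𝒰 × 𝒳 × 𝒴 × 𝒵 => ∑ w : 𝒳 × 𝒴,
        V (q.1, q.2.1, q.2.2.1, w.1, w.2, q.2.2.2))
      = ent (fun r : 𝒰 × 𝒳 × 𝒴 × 𝒵 => ∑ xt, ∑ yt,
        V (r.1, r.2.1, r.2.2.1, xt, yt, r.2.2.2)) := by
    refine congrArg ent (funext fun q => ?_)
    simp only [Fintype.sum_prod_type]
  have hc3 : ent (fun p : 𝒰 × (𝒳 × 𝒴) × (𝒳 × 𝒴 × 𝒵) =>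
        V (p.1, p.2.2.1, p.2.2.2.1, p.2.1.1, p.2.1.2, p.2.2.2.2)) = ent V :=
    ent_reindex' pe3 V _ (fun a => rfl)
  have hc4 : ent (fun c : 𝒰 => ∑ a : 𝒳 × 𝒴, ∑ w : 𝒳 × 𝒴 × 𝒵,
        V (c, w.1, w.2.1, a.1, a.2, w.2.2))
      = ent (fun c : 𝒰 => ∑ x, ∑ y, ∑ xt, ∑ yt, ∑ z, V (c, x, y, xt, yt, z)) := by
    refine congrArg ent (funext fun c => ?_)
    simp only [Fintype.sum_prod_type]
    exact hswapU c
  have hd1 : ent (fun q : 𝒰 × 𝒳 => ∑ yt : 𝒴, ∑ x : 𝒳, ∑ y : 𝒴, ∑ z : 𝒵,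
        V (q.1, x, y, q.2, yt, z))
      = ent (fun r : 𝒰 × 𝒳 => ∑ y, ∑ xt, ∑ yt, ∑ z, V (r.1, r.2, y, xt, yt, z)) := by
    refine congrArg ent (funext fun q => ?_)
    calc ∑ yt : 𝒴, ∑ x : 𝒳, ∑ y : 𝒴, ∑ z : 𝒵, V (q.1, x, y, q.2, yt, z)
        = ∑ x : 𝒳, ∑ yt : 𝒴, ∑ y : 𝒴, ∑ z : 𝒵, V (q.1, x, y, q.2, yt, z) := Finset.sum_comm
      _ = ∑ x : 𝒳, ∑ y : 𝒴, ∑ yt : 𝒴, ∑ z : 𝒵, V (q.1, x, y, q.2, yt, z) :=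
          Finset.sum_congr rfl fun _ _ => Finset.sum_comm
      _ = ∑ y, ∑ xt, ∑ yt, ∑ z, V (q.1, q.2, y, xt, yt, z) := (hmargX q.1 q.2).symm
  have hd2 : ent (fun q : 𝒰 × 𝒴 => ∑ xt : 𝒳, ∑ x : 𝒳, ∑ y : 𝒴, ∑ z : 𝒵,
        V (q.1, x, y, xt, q.2, z))
      = ent (fun r : 𝒰 × 𝒴 => ∑ x, ∑ xt, ∑ yt, ∑ z, V (r.1, x, r.2, xt, yt, z)) := by
    refine congrArg ent (funext fun q => ?_)
    calc ∑ xt : 𝒳, ∑ x : 𝒳, ∑ y : 𝒴, ∑ z : 𝒵, V (q.1, x, y, xt, q.2, z)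
        = ∑ x : 𝒳, ∑ xt : 𝒳, ∑ y : 𝒴, ∑ z : 𝒵, V (q.1, x, y, xt, q.2, z) := Finset.sum_comm
      _ = ∑ x : 𝒳, ∑ y : 𝒴, ∑ xt : 𝒳, ∑ z : 𝒵, V (q.1, x, y, xt, q.2, z) :=
          Finset.sum_congr rfl fun _ _ => Finset.sum_comm
      _ = ∑ x, ∑ xt, ∑ yt, ∑ z, V (q.1, x, q.2, xt, yt, z) := (hmargY q.1 q.2).symm
  have hd4 : ent (fun c : 𝒰 => ∑ xt : 𝒳, ∑ yt : 𝒴, ∑ x : 𝒳, ∑ y : 𝒴, ∑ z : 𝒵,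
        V (c, x, y, xt, yt, z))
      = ent (fun c : 𝒰 => ∑ x, ∑ y, ∑ xt, ∑ yt, ∑ z, V (c, x, y, xt, yt, z)) :=
    congrArg ent (funext fun c => hswapU c)
  -- submodularity
  have hsub : 0 ≤ cmi (fun w : (𝒰 × 𝒵) × (𝒳 × 𝒴) × (𝒳 × 𝒴) =>
      V (w.1.1, w.2.1.1, w.2.1.2, w.2.2.1, w.2.2.2, w.1.2)) := by
    refine cmi_nonneg _ (fun t => hV0 _) ?_
    calc (∑ w : (𝒰 × 𝒵) × (𝒳 × 𝒴) × (𝒳 × 𝒴),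
          V (w.1.1, w.2.1.1, w.2.1.2, w.2.2.1, w.2.2.2, w.1.2))
        = ∑ t, V t := Equiv.sum_comp pesub V
      _ = 1 := hV1
  have hsub1 : ent (fun q : (𝒰 × 𝒵) × 𝒳 × 𝒴 => ∑ b : 𝒳 × 𝒴,
        V (q.1.1, q.2.1, q.2.2, b.1, b.2, q.1.2))
      = ent (fun r : 𝒰 × 𝒳 × 𝒴 × 𝒵 => ∑ xt, ∑ yt,
        V (r.1, r.2.1, r.2.2.1, xt, yt, r.2.2.2)) := by
    refine ent_reindex' pe1 _ _ (fun a => ?_)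
    simp only [Fintype.sum_prod_type]
    rfl
  have hsub2 : ent (fun q : (𝒰 × 𝒵) × 𝒳 × 𝒴 => ∑ a : 𝒳 × 𝒴,
        V (q.1.1, a.1, a.2, q.2.1, q.2.2, q.1.2))
      = ent (fun r : 𝒰 × 𝒳 × 𝒴 × 𝒵 => ∑ x, ∑ y,
        V (r.1, x, y, r.2.1, r.2.2.1, r.2.2.2)) := by
    refine ent_reindex' pe1 _ _ (fun a => ?_)
    simp only [Fintype.sum_prod_type]
    rfl
  have hsub3 : ent (fun w : (𝒰 × 𝒵) × (𝒳 × 𝒴) × (𝒳 × 𝒴) =>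
        V (w.1.1, w.2.1.1, w.2.1.2, w.2.2.1, w.2.2.2, w.1.2)) = ent V :=
    ent_reindex' pesub V _ (fun a => rfl)
  have hsub4 : ent (fun c : 𝒰 × 𝒵 => ∑ a : 𝒳 × 𝒴, ∑ b : 𝒳 × 𝒴,
        V (c.1, a.1, a.2, b.1, b.2, c.2))
      = ent (fun r : 𝒰 × 𝒵 => ∑ x, ∑ y, ∑ xt, ∑ yt, V (r.1, x, y, xt, yt, r.2)) := by
    refine congrArg ent (funext fun c => ?_)
    simp only [Fintype.sum_prod_type]
  rw [cmi] at hsub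
  rw [hsub1, hsub2, hsub3, hsub4] at hsub
  simp only [cmi]
  rw [ha1, ha2, ha3, ha4, hc1, hc2, hc3, hc4, hd1, hd2, hd4]
  linarith [hH, hsub]
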